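/- Let A be an N×N real matrix with N simple (pairwise distinct real) eigenvalues. Then there exist vectors l, w ∈ ℝ^N such that all eigenvalues of A + w lᵀ have negative real part. -/

import Mathlib

open Matrix Polynomial

section DetLemma

variable {n : Type*} [Fintype n] [DecidableEq n] {R : Type*} [CommRing R]

lemma det_updateRow_diagonal (d : n → R) (i : n) (bb : n → R) :
    (Matrix.updateRow (Matrix.diagonal d) i bb).det
      = bb i * ∏ j ∈ Finset.univ.erase i, d j := by
  have h : Matrix.updateRow (Matrix.diagonal d) i bb
      = (Matrix.updateCol (Matrix.diagonal d) i bb)ᵀ := by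
    rw [← Matrix.updateRow_transpose, Matrix.diagonal_transpose]
  rw [h, Matrix.det_transpose, ← Matrix.cramer_apply, Matrix.cramer_eq_adjugate_mulVec,
    Matrix.adjugate_diagonal, Matrix.mulVec_diagonal, mul_comm]

lemma det_diagonal_add_vecMulVec (d a bb : n → R) :
    (Matrix.diagonal d + Matrix.vecMulVec a bb).det
      = (∏ i, d i) + ∑ i, a i * bb i * ∏ j ∈ Finset.univ.erase i, d j := by
  classical
  set f := (Matrix.detRowAlternating : (n → R) [⋀^n]→ₗ[R] R) with hf
  have expand := f.toMultilinearMap.map_add_univ (fun i => a i • bb) (Matrix.diagonal d)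
  have h0 : (Matrix.diagonal d + Matrix.vecMulVec a bb).det
      = ∑ s : Finset n, f (s.piecewise (fun i => a i • bb) (Matrix.diagonal d)) := by
    have e2 : (∑ s : Finset n,
          f.toMultilinearMap (s.piecewise (fun i => a i • bb) (Matrix.diagonal d)))
        = ∑ s : Finset n, f (s.piecewise (fun i => a i • bb) (Matrix.diagonal d)) := by
      simp only [AlternatingMap.coe_multilinearMap]
    rw [← e2, ← expand]
    show f _ = f _
    congr 1
    funext i j
    simp only [Matrix.add_apply, Pi.add_apply, Pi.smul_apply, smul_eq_mul,
      Matrix.vecMulVec_apply]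
    exact add_comm _ _
  rw [h0]
  have hzero : ∀ s : Finset n, 1 < s.card →
      f (s.piecewise (fun i => a i • bb) (Matrix.diagonal d)) = 0 := by
    intro s hs
    obtain ⟨i, hi, j, hj, hij⟩ := Finset.one_lt_card.mp hs
    set r := s.piecewise (fun i => a i • bb) (Matrix.diagonal d) with hr
    have hri : r i = a i • bb := s.piecewise_eq_of_mem _ _ hi
    have h1 : f r = a i • f (Function.update r i bb) := by
      conv_lhs => rw [← Function.update_eq_self i r, hri]
      exact f.map_update_smul r i (a i) bb
    have hr'j : Function.update r i bb j = a j • bb := by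
      rw [Function.update_of_ne hij.symm, hr]
      exact s.piecewise_eq_of_mem _ _ hj
    have h2 : f (Function.update r i bb)
        = a j • f (Function.update (Function.update r i bb) j bb) := by
      conv_lhs => rw [← Function.update_eq_self j (Function.update r i bb), hr'j]
      exact f.map_update_smul _ j (a j) bb
    have h3 : f (Function.update (Function.update r i bb) j bb) = 0 := by
      apply f.map_eq_zero_of_eq _ _ hij
      rw [Function.update_of_ne hij, Function.update_self, Function.update_self]
    rw [h1, h2, h3, smul_zero, smul_zero]
  have hsub : ∑ s : Finset n, f (s.piecewise (fun i => a i • bb) (Matrix.diagonal d))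
      = ∑ s ∈ insert (∅ : Finset n) (Finset.univ.image fun i => ({i} : Finset n)),
          f (s.piecewise (fun i => a i • bb) (Matrix.diagonal d)) := by
    refine (Finset.sum_subset (Finset.subset_univ _) ?_).symm
    intro s _ hs
    refine hzero s ?_
    simp only [Finset.mem_insert, Finset.mem_image, Finset.mem_univ, true_and,
      not_or, not_exists] at hs
    have h0' : s.card ≠ 0 := by
      intro h; exact hs.1 (Finset.card_eq_zero.mp h)
    have h1' : s.card ≠ 1 := by
      intro h
      obtain ⟨x, hx⟩ := Finset.card_eq_one.mp h
      exact hs.2 x hx.symm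
    omega
  rw [hsub, Finset.sum_insert (by
      simp only [Finset.mem_image, Finset.mem_univ, true_and, not_exists]
      exact fun x h => Finset.singleton_ne_empty x h),
    Finset.sum_image (fun i _ j _ h => Finset.singleton_injective h)]
  congr 1
  · erw [Finset.piecewise_empty]
    exact Matrix.det_diagonal
  · refine Finset.sum_congr rfl fun i _ => ?_
    erw [Finset.piecewise_singleton]
    have : f (Function.update (Matrix.diagonal d : n → n → R) i (a i • bb))
        = (Matrix.updateRow (Matrix.diagonal d) i (a i • bb)).det := rfl
    rw [this, Matrix.det_updateRow_smul, det_updateRow_diagonal]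
    ring

lemma charpoly_diagonal_add_vecMulVec (d a bb : n → R) :
    (Matrix.diagonal d + Matrix.vecMulVec a bb).charpoly
      = (∏ i, (X - C (d i)))
        - ∑ i, C (a i * bb i) * ∏ j ∈ Finset.univ.erase i, (X - C (d j)) := by
  rw [Matrix.charpoly]
  have h : Matrix.charmatrix (Matrix.diagonal d + Matrix.vecMulVec a bb)
      = Matrix.diagonal (fun i => (X : R[X]) - C (d i))
        + Matrix.vecMulVec (fun i => -C (a i)) (fun i => C (bb i)) := by
    ext i j
    by_cases hij : i = j <;>
      simp [Matrix.charmatrix_apply, Matrix.diagonal_apply, Matrix.vecMulVec_apply,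
        Matrix.add_apply, hij, Matrix.one_apply] <;>
      ring
  rw [h, det_diagonal_add_vecMulVec]
  rw [sub_eq_add_neg, ← Finset.sum_neg_distrib]
  congr 1
  refine Finset.sum_congr rfl fun i _ => ?_
  rw [C_mul]
  ring

end DetLemma

lemma exists_stab (N : ℕ) (μ : Fin N → ℝ) (hμ : Function.Injective μ) :
    ∃ c : Fin N → ℝ,
      (Matrix.diagonal μ + Matrix.vecMulVec c (fun _ => 1)).charpoly
        = ((X + C 1 : ℝ[X])) ^ N := by
  classical
  set P : ℝ[X] := ∏ i : Fin N, (X - C (μ i)) with hP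
  set p : ℝ[X] := (X + C 1) ^ N with hp
  have hmonP : P.Monic := monic_prod_of_monic _ _ fun i _ => monic_X_sub_C _
  have hmonp : p.Monic := (monic_X_add_C _).pow _
  have hPdeg : P.degree = (N : ℕ) := by
    rw [hP, degree_prod]
    simp [degree_X_sub_C]
  have hpdeg : p.degree = (N : ℕ) := by
    rw [hp, degree_pow, degree_X_add_C]
    simp [mul_one]
  have hqdeg : (P - p).degree < (N : ℕ) := by
    rw [← hPdeg]
    exact degree_sub_lt (hPdeg.trans hpdeg.symm) hmonP.ne_zero
      (hmonP.leadingCoeff.trans hmonp.leadingCoeff.symm)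
  set c : Fin N → ℝ :=
    fun i => (P - p).eval (μ i) * (∏ j ∈ Finset.univ.erase i, (μ i - μ j))⁻¹ with hc
  have hprodne : ∀ i : Fin N, (∏ j ∈ Finset.univ.erase i, (μ i - μ j)) ≠ 0 := by
    intro i
    rw [Finset.prod_ne_zero_iff]
    intro j hj
    exact sub_ne_zero_of_ne fun h => (Finset.mem_erase.mp hj).1 (hμ h.symm)
  have key : (∑ i : Fin N, C (c i) * ∏ j ∈ Finset.univ.erase i, (X - C (μ j))) = P - p := by
    refine Polynomial.eq_of_degrees_lt_of_eval_index_eq (Finset.univ : Finset (Fin N))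
      hμ.injOn ?_ ?_ ?_
    · refine lt_of_le_of_lt (degree_sum_le _ _) ?_
      rw [Nat.cast_withBot, Finset.sup_lt_iff (WithBot.bot_lt_coe _)]
      intro i _
      have h1 : (∏ j ∈ Finset.univ.erase i, (X - C (μ j)) : ℝ[X]).degree
          = ((Finset.univ.erase i).card : ℕ) := by
        rw [degree_prod]
        simp [degree_X_sub_C]
      have hle : (C (c i) * ∏ j ∈ Finset.univ.erase i, (X - C (μ j)) : ℝ[X]).degree
          ≤ (((Finset.univ.erase i).card : ℕ) : WithBot ℕ) := by
        refine le_trans (degree_mul_le _ _) ?_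
        rw [← zero_add (((Finset.univ.erase i).card : ℕ) : WithBot ℕ)]
        exact add_le_add degree_C_le (le_of_eq h1)
      refine lt_of_le_of_lt hle ?_
      rw [Nat.cast_withBot, WithBot.coe_lt_coe]
      exact Finset.card_erase_lt_of_mem (Finset.mem_univ i)
    · simpa using hqdeg
    · intro i _
      rw [eval_finset_sum]
      rw [Finset.sum_eq_single i]
      · rw [eval_mul, eval_C, eval_prod]
        simp only [eval_sub, eval_X, eval_C]
        rw [hc, mul_assoc, inv_mul_cancel₀ (hprodne i), mul_one, eval_sub]
      · intro k _ hki
        rw [eval_mul, eval_prod]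
        have : ∏ j ∈ Finset.univ.erase k, Polynomial.eval (μ i) (X - C (μ j)) = 0 := by
          refine Finset.prod_eq_zero (Finset.mem_erase.mpr ⟨Ne.symm hki, Finset.mem_univ i⟩) ?_
          simp
        rw [this, mul_zero]
      · intro h; exact absurd (Finset.mem_univ i) h
  refine ⟨c, ?_⟩
  rw [charpoly_diagonal_add_vecMulVec]
  simp only [mul_one]
  rw [key]
  rw [← hP]
  ring

theorem rank_one_stabilization
    (N : ℕ) (A : Matrix (Fin N) (Fin N) ℝ)
    (μ : Fin N → ℝ) (hμ : Function.Injective μ)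
    (hchar : A.charpoly = ∏ i : Fin N, (X - C (μ i))) :
    ∃ l w : Fin N → ℝ, ∀ z : ℂ,
      (Polynomial.aeval z) ((A + vecMulVec w l).charpoly) = 0 → z.re < 0 := by
  classical
  rcases isEmpty_or_nonempty (Fin N) with hN | hN
  · refine ⟨0, 0, fun z hz => absurd hz ?_⟩
    have h1 : (A + vecMulVec 0 0).charpoly = 1 := by
      rw [Matrix.charpoly, Matrix.det_isEmpty]
    rw [h1]
    simp
  · obtain ⟨c, hc⟩ := exists_stab N μ hμ
    -- eigenvectors
    have hev : ∀ i : Fin N, ∃ v : Fin N → ℝ, v ≠ 0 ∧ A *ᵥ v = μ i • v := by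
      intro i
      have h1 : Polynomial.eval (μ i) A.charpoly = 0 := by
        rw [hchar, eval_prod]
        exact Finset.prod_eq_zero (Finset.mem_univ i) (by simp)
      have hdet : (μ i • (1 : Matrix (Fin N) (Fin N) ℝ) - A).det = 0 := by
        rw [Matrix.charpoly] at h1
        have h2 := (RingHom.map_det (evalRingHom (μ i)) (Matrix.charmatrix A)).symm
        have h3 : (evalRingHom (μ i)).mapMatrix (Matrix.charmatrix A)
            = μ i • (1 : Matrix (Fin N) (Fin N) ℝ) - A := by
          rw [RingHom.mapMatrix_apply]
          ext i' j'
          by_cases h : i' = j' <;>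
            simp [Matrix.charmatrix_apply, Matrix.map_apply, Matrix.one_apply,
              Matrix.diagonal_apply, Matrix.sub_apply, Matrix.smul_apply, h]
        rw [h3] at h2
        rw [h2]
        exact h1
      obtain ⟨v, hv0, hv⟩ := (Matrix.exists_mulVec_eq_zero_iff).mpr hdet
      refine ⟨v, hv0, ?_⟩
      rw [Matrix.sub_mulVec, Matrix.smul_mulVec, Matrix.one_mulVec, sub_eq_zero] at hv
      exact hv.symm
    choose v hv0 hvA using hev
    set f : Module.End ℝ (Fin N → ℝ) := Matrix.mulVecLin A with hfdef
    have hasEig : ∀ i, Module.End.HasEigenvector f (μ i) (v i) := by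
      intro i
      refine ⟨Module.End.mem_eigenspace_iff.mpr ?_, hv0 i⟩
      rw [hfdef]
      simpa [Matrix.mulVecLin_apply] using hvA i
    have hli := Module.End.eigenvectors_linearIndependent' f μ hμ v hasEig
    set b := basisOfLinearIndependentOfCardEqFinrank hli
      (by simp [Module.finrank_fintype_fun_eq_card]) with hbdef
    have hb : ⇑b = v := coe_basisOfLinearIndependentOfCardEqFinrank _ _
    have hDiag : LinearMap.toMatrix b b f = Matrix.diagonal μ := by
      ext i j
      rw [LinearMap.toMatrix_apply]
      have hfb : f (b j) = μ j • b j := by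
        rw [show b j = v j from congrFun hb j]
        exact (hasEig j).apply_eq_smul
      rw [hfb, _root_.map_smul, Module.Basis.repr_self]
      by_cases h : i = j
      · simp [h]
      · simp [h, Matrix.diagonal_apply, Finsupp.single_apply, Ne.symm h]
    -- build the rank-one correction
    set w : Fin N → ℝ := ∑ i, c i • b i with hwdef
    set φ : (Fin N → ℝ) →ₗ[ℝ] ℝ := ∑ i, b.coord i with hφdef
    set l : Fin N → ℝ := fun j => φ (Pi.single j 1) with hldef
    set g : Module.End ℝ (Fin N → ℝ) := φ.smulRight w with hgdef
    have hgW : Matrix.mulVecLin (Matrix.vecMulVec w l) = g := by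
      apply (Pi.basisFun ℝ (Fin N)).ext
      intro j
      funext i
      simp only [Pi.basisFun_apply, Matrix.mulVecLin_apply, hgdef, LinearMap.smulRight_apply,
        Pi.smul_apply, smul_eq_mul]
      rw [Matrix.mulVec_single_one]
      simp only [transpose_apply, Matrix.col_apply, Matrix.vecMulVec_apply, hldef]
      ring
    have hgMat : LinearMap.toMatrix b b g = Matrix.vecMulVec c (fun _ => 1) := by
      ext i j
      rw [LinearMap.toMatrix_apply]
      have hφb : φ (b j) = 1 := by
        rw [hφdef]
        simp [LinearMap.sum_apply, Module.Basis.coord_apply, Module.Basis.repr_self, Finsupp.single_apply]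
      have hgb : g (b j) = w := by
        rw [hgdef, LinearMap.smulRight_apply, hφb, one_smul]
      rw [hgb, hwdef, Module.Basis.repr_sum_self]
      simp [Matrix.vecMulVec_apply]
    have hMchar : ∀ (M : Matrix (Fin N) (Fin N) ℝ),
        M.charpoly = (Matrix.mulVecLin M).charpoly := by
      intro M
      have h1 := LinearMap.charpoly_toMatrix (Matrix.mulVecLin M) (Pi.basisFun ℝ (Fin N))
      rw [LinearMap.toMatrix_eq_toMatrix'] at h1
      rw [← h1]
      congr 1
      rw [show Matrix.mulVecLin M = Matrix.toLin' M from (Matrix.toLin'_apply' M).symm,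
        LinearMap.toMatrix'_toLin']
    have hsum : Matrix.mulVecLin (A + Matrix.vecMulVec w l) = f + g := by
      rw [← hgW, hfdef]
      ext x
      simp [Matrix.mulVecLin_apply, Matrix.add_mulVec]
    have hfinal : (A + Matrix.vecMulVec w l).charpoly = ((X + C 1 : ℝ[X])) ^ N := by
      rw [hMchar, hsum, ← LinearMap.charpoly_toMatrix (f + g) b, map_add, hDiag, hgMat, hc]
    refine ⟨l, w, fun z hz => ?_⟩
    rw [hfinal] at hz
    rw [map_pow] at hz
    have hz1 : (Polynomial.aeval z) ((X + C 1 : ℝ[X])) = 0 := by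
      have hNne : N ≠ 0 := by
        intro h
        subst h; exact hN.elim (fun i => i.elim0)
      exact pow_eq_zero_iff hNne |>.mp hz
    have hz2 : z + 1 = 0 := by
      rw [map_add, aeval_X, aeval_C] at hz1
      simpa using hz1
    have hzval : z = -1 := eq_neg_of_add_eq_zero_left hz2
    rw [hzval]
    norm_num
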